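/- Let f : [0, ∞) → (0, ∞)^{L_R*} be a solution of the discrete near-resonance acoustic kinetic system with broadening Λ ≥ 0, with strictly positive values. Then the product ∏_{p∈L_R*} f_p(t) is nondecreasing in t. -/

import Mathlib

open scoped BigOperators Classical

/-- Euclidean norm of a point of the integer lattice `ℤ³`. -/
noncomputable def enorm3 (p : Fin 3 → ℤ) : ℝ := Real.sqrt (∑ i, ((p i : ℝ))^2)

/-- The truncated lattice `L_R* = {p ∈ ℤ³ : 0 < |p| < R}` (as a finite set). -/
noncomputable def latticeBall (R : ℝ) : Finset (Fin 3 → ℤ) :=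
  (Finset.Icc (fun _ => (-⌈R⌉ : ℤ)) (fun _ => (⌈R⌉ : ℤ))).filter
    (fun p => 0 < enorm3 p ∧ enorm3 p < R)

/-- Right-hand side of the discrete exact-resonance acoustic wave kinetic system, with
kernel `V_{p₁,p₂,p₃} = |p₁||p₂||p₃|` and phonon dispersion `ω(p) = |p|`. -/
noncomputable def Qres (R : ℝ) (f : (Fin 3 → ℤ) → ℝ) (p1 : Fin 3 → ℤ) : ℝ :=
  (∑ p2 ∈ latticeBall R, ∑ p3 ∈ latticeBall R,
      if p1 = p2 + p3 ∧ enorm3 p1 = enorm3 p2 + enorm3 p3 then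
        enorm3 p1 * enorm3 p2 * enorm3 p3 *
          (f p2 * f p3 - f p1 * (f p2 + f p3)) else 0)
  - 2 * ∑ p2 ∈ latticeBall R, ∑ p3 ∈ latticeBall R,
      if p3 = p1 + p2 ∧ enorm3 p3 = enorm3 p1 + enorm3 p2 then
        enorm3 p1 * enorm3 p2 * enorm3 p3 *
          (f p1 * f p2 - f p3 * (f p1 + f p2)) else 0

/-- Right-hand side of the discrete near-resonance acoustic wave kinetic system with
resonance broadening `Λ`. -/
noncomputable def QNR (R Λ : ℝ) (f : (Fin 3 → ℤ) → ℝ) (p1 : Fin 3 → ℤ) : ℝ :=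
  (∑ p2 ∈ latticeBall R, ∑ p3 ∈ latticeBall R,
      if p1 = p2 + p3 ∧ |enorm3 p1 - enorm3 p2 - enorm3 p3| ≤ Λ then
        enorm3 p1 * enorm3 p2 * enorm3 p3 *
          (f p2 * f p3 - f p1 * (f p2 + f p3)) else 0)
  - 2 * ∑ p2 ∈ latticeBall R, ∑ p3 ∈ latticeBall R,
      if p3 = p1 + p2 ∧ |enorm3 p3 - enorm3 p1 - enorm3 p2| ≤ Λ then
        enorm3 p1 * enorm3 p2 * enorm3 p3 *
          (f p1 * f p2 - f p3 * (f p1 + f p2)) else 0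

noncomputable def Tk (Λ : ℝ) (f : (Fin 3 → ℤ) → ℝ) (p1 p2 p3 : Fin 3 → ℤ) : ℝ :=
  if p1 = p2 + p3 ∧ |enorm3 p1 - enorm3 p2 - enorm3 p3| ≤ Λ then
    enorm3 p1 * enorm3 p2 * enorm3 p3 * (f p2 * f p3 - f p1 * (f p2 + f p3)) else 0

lemma Tk_symm (Λ : ℝ) (f : (Fin 3 → ℤ) → ℝ) (p1 p2 p3 : Fin 3 → ℤ) :
    Tk Λ f p1 p2 p3 = Tk Λ f p1 p3 p2 := by
  unfold Tk
  rw [show p2 + p3 = p3 + p2 from add_comm _ _,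
    show enorm3 p1 - enorm3 p2 - enorm3 p3 = enorm3 p1 - enorm3 p3 - enorm3 p2 by ring]
  split_ifs with h
  · ring
  · rfl

lemma QNR_eq (R Λ : ℝ) (f : (Fin 3 → ℤ) → ℝ) (p1 : Fin 3 → ℤ) :
    QNR R Λ f p1 = (∑ p2 ∈ latticeBall R, ∑ p3 ∈ latticeBall R, Tk Λ f p1 p2 p3)
      - 2 * ∑ p2 ∈ latticeBall R, ∑ p3 ∈ latticeBall R, Tk Λ f p3 p1 p2 := by
  unfold QNR Tk
  congr 1
  congr 1
  refine Finset.sum_congr rfl fun p2 _ => Finset.sum_congr rfl fun p3 _ => ?_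
  split_ifs with h
  · ring
  · rfl

lemma key_nonneg (R Λ : ℝ) (f : (Fin 3 → ℤ) → ℝ)
    (hpos : ∀ p ∈ latticeBall R, 0 < f p) :
    0 ≤ ∑ p ∈ latticeBall R, (∏ q ∈ (latticeBall R).erase p, f q) * QNR R Λ f p := by
  classical
  set S := latticeBall R with hS
  set g : (Fin 3 → ℤ) → ℝ := fun p => ∏ q ∈ S.erase p, f q with hg
  have h1 : ∑ a ∈ S, g a * QNR R Λ f a
      = (∑ a ∈ S, ∑ b ∈ S, ∑ c ∈ S, g a * Tk Λ f a b c)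
        - 2 * ∑ a ∈ S, ∑ b ∈ S, ∑ c ∈ S, g a * Tk Λ f c a b := by
    have : ∀ a ∈ S, g a * QNR R Λ f a
        = (∑ b ∈ S, ∑ c ∈ S, g a * Tk Λ f a b c)
          - 2 * ∑ b ∈ S, ∑ c ∈ S, g a * Tk Λ f c a b := by
      intro a _
      rw [QNR_eq, mul_sub, mul_left_comm]
      simp only [Finset.mul_sum]
      rfl
    rw [Finset.sum_congr rfl this, Finset.sum_sub_distrib, ← Finset.mul_sum]
  have h2 : ∑ a ∈ S, ∑ b ∈ S, ∑ c ∈ S, g a * Tk Λ f c a b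
      = ∑ a ∈ S, ∑ b ∈ S, ∑ c ∈ S, g b * Tk Λ f a b c := by
    rw [show (∑ a ∈ S, ∑ b ∈ S, ∑ c ∈ S, g a * Tk Λ f c a b)
        = ∑ a ∈ S, ∑ c ∈ S, ∑ b ∈ S, g a * Tk Λ f c a b from
      Finset.sum_congr rfl fun a _ => Finset.sum_comm]
    exact Finset.sum_comm
  have h3 : ∑ a ∈ S, ∑ b ∈ S, ∑ c ∈ S, g b * Tk Λ f a b c
      = ∑ a ∈ S, ∑ b ∈ S, ∑ c ∈ S, g c * Tk Λ f a b c := by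
    refine Finset.sum_congr rfl fun a _ => ?_
    rw [Finset.sum_comm]
    refine Finset.sum_congr rfl fun b _ => Finset.sum_congr rfl fun c _ => ?_
    rw [Tk_symm]
  have hE : ∑ a ∈ S, g a * QNR R Λ f a
      = ∑ a ∈ S, ∑ b ∈ S, ∑ c ∈ S,
          (g a * Tk Λ f a b c - g b * Tk Λ f a b c - g c * Tk Λ f a b c) := by
    rw [h1, h2, two_mul]
    nth_rewrite 2 [h3]
    rw [sub_add_eq_sub_sub]
    simp only [← Finset.sum_sub_distrib]
  rw [hE]
  refine Finset.sum_nonneg fun a ha => Finset.sum_nonneg fun b hb =>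
    Finset.sum_nonneg fun c hc => ?_
  unfold Tk
  split_ifs with h
  · set V := enorm3 a * enorm3 b * enorm3 c with hV
    set A := f b * f c - f a * (f b + f c) with hA
    have h0 : ∀ p : Fin 3 → ℤ, 0 ≤ enorm3 p := fun p => Real.sqrt_nonneg _
    have hVnn : 0 ≤ V := mul_nonneg (mul_nonneg (h0 a) (h0 b)) (h0 c)
    have hP : 0 < ∏ q ∈ S, f q := Finset.prod_pos hpos
    have hea : f a * g a = ∏ q ∈ S, f q := Finset.mul_prod_erase S f ha
    have heb : f b * g b = ∏ q ∈ S, f q := Finset.mul_prod_erase S f hb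
    have hec : f c * g c = ∏ q ∈ S, f q := Finset.mul_prod_erase S f hc
    have hq : (f a * f b * f c) * (A * (g a - g b - g c)) = (∏ q ∈ S, f q) * A ^ 2 := by
      linear_combination (A * (f b * f c)) * hea - (A * (f a * f c)) * heb
        - (A * (f a * f b)) * hec
    have hfa := hpos a ha; have hfb := hpos b hb; have hfc := hpos c hc
    have hprod : 0 < f a * f b * f c := by positivity
    have hAg : 0 ≤ A * (g a - g b - g c) := by
      nlinarith [mul_nonneg hP.le (sq_nonneg A)]
    have : g a * (V * A) - g b * (V * A) - g c * (V * A) = V * (A * (g a - g b - g c)) := by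
      ring
    rw [this]
    exact mul_nonneg hVnn hAg
  · simp

/-- Along every positive solution of the discrete near-resonance acoustic kinetic
system, the product `∏_{p∈L_R*} f_p(t)` is nondecreasing in `t`
(equivalently, `L(f) = −∏_p f_p` is a Lyapunov function). -/
theorem product_nondecreasing (R Λ : ℝ) (hR : 0 < R) (hΛ : 0 ≤ Λ)
    (f : ℝ → (Fin 3 → ℤ) → ℝ)
    (hsol : ∀ p ∈ latticeBall R, ∀ t : ℝ, 0 ≤ t →
      HasDerivAt (fun s => f s p) (QNR R Λ (f t) p) t)
    (hpos : ∀ p ∈ latticeBall R, ∀ t : ℝ, 0 ≤ t → 0 < f t p) :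
    ∀ s t : ℝ, 0 ≤ s → s ≤ t →
      ∏ p ∈ latticeBall R, f s p ≤ ∏ p ∈ latticeBall R, f t p := by
  intro s t hs hst
  have hmono : MonotoneOn (fun u => ∏ p ∈ latticeBall R, f u p) (Set.Ici (0:ℝ)) := by
    apply monotoneOn_of_deriv_nonneg (convex_Ici 0)
    · intro x hx
      have hd := HasDerivAt.fun_finsetProd
        (u := latticeBall R) (f := fun p s => f s p)
        (f' := fun p => QNR R Λ (f x) p) (fun p hp => hsol p hp x hx)
      exact hd.continuousAt.continuousWithinAt
    · intro x hx
      rw [interior_Ici] at hx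
      have hd := HasDerivAt.fun_finsetProd
        (u := latticeBall R) (f := fun p s => f s p)
        (f' := fun p => QNR R Λ (f x) p) (fun p hp => hsol p hp x hx.le)
      exact hd.differentiableAt.differentiableWithinAt
    · intro x hx
      rw [interior_Ici] at hx
      have hd := HasDerivAt.fun_finsetProd
        (u := latticeBall R) (f := fun p s => f s p)
        (f' := fun p => QNR R Λ (f x) p) (fun p hp => hsol p hp x hx.le)
      have hderiv : deriv (fun u => ∏ p ∈ latticeBall R, f u p) x
          = ∑ p ∈ latticeBall R,
              (∏ q ∈ (latticeBall R).erase p, f x q) • QNR R Λ (f x) p := hd.deriv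
      rw [hderiv]
      simpa [smul_eq_mul] using key_nonneg R Λ (f x) (fun p hp => hpos p hp x hx.le)
  exact hmono hs (hs.trans hst) hst
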